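/- Let k ≥ 2, let M be a matroid on the finite ground set V with rank r ≥ 1, let f : (k+1)^V → ℝ be orthant submodular and pairwise monotone with f(0) ≥ 0, let ε ≥ 0, and let f̂ : (k+1)^V → ℝ satisfy |f(x) − f̂(x)| ≤ ε for all x. Let s^{(0)} = 0, and for j = 1, …, r let s^{(j)} = s^{(j−1)}[e_j ↦ i_j], where supp(s^{(j−1)}) ∪ {e_j} is independent in M with e_j ∉ supp(s^{(j−1)}), and Δ_{e_j,i_j} f̂(s^{(j−1)}) ≥ Δ_{e,i} f̂(s^{(j−1)}) for every e ∉ supp(s^{(j−1)}) with supp(s^{(j−1)}) ∪ {e} independent and every i ∈ {1,…,k}. Then for every o ∈ (k+1)^V whose support supp(o) is a basis of M, the output s = s^{(r)} satisfies f(s) ≥ (1/3)·f(o) − (4/3)·(r+1)·ε. -/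
import Mathlib


namespace Stmt11

variable {V : Type*}

/-- A matroid on `V`, given by its collection of independent (finite) subsets. -/
structure FinMatroid (V : Type*) [DecidableEq V] where
  Indep : Finset V → Prop
  indep_empty : Indep ∅
  indep_subset : ∀ ⦃A B : Finset V⦄, A ⊆ B → Indep B → Indep A
  indep_exchange : ∀ ⦃A B : Finset V⦄, Indep A → Indep B → A.card < B.card →
    ∃ x ∈ B \ A, Indep (insert x A)

/-- A basis is a maximal independent set. -/
def FinMatroid.IsBasis [DecidableEq V] (M : FinMatroid V) (B : Finset V) : Prop :=
  M.Indep B ∧ ∀ ⦃A : Finset V⦄, M.Indep A → B ⊆ A → A = B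

/-- Marginal gain `Δ_{e,i} f(x) = f(x[e↦i]) − f(x)`. -/
def marg {k : ℕ} [DecidableEq V] (f : (V → Fin (k+1)) → ℝ)
    (x : V → Fin (k+1)) (e : V) (i : Fin (k+1)) : ℝ :=
  f (Function.update x e i) - f x

/-- `x ⪯ y` : `y` agrees with `x` on the support of `x`. -/
def preceq {k : ℕ} (x y : V → Fin (k+1)) : Prop :=
  ∀ e, x e ≠ 0 → y e = x e

def PairwiseMonotone {k : ℕ} [DecidableEq V] (f : (V → Fin (k+1)) → ℝ) : Prop :=
  ∀ x : V → Fin (k+1), ∀ e, x e = 0 → ∀ i j : Fin (k+1), i ≠ 0 → j ≠ 0 → i ≠ j →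
    marg f x e i + marg f x e j ≥ 0

def OrthantSubmodular {k : ℕ} [DecidableEq V] (f : (V → Fin (k+1)) → ℝ) : Prop :=
  ∀ x y : V → Fin (k+1), preceq x y → ∀ e, y e = 0 → ∀ i : Fin (k+1), i ≠ 0 →
    marg f x e i ≥ marg f y e i

/-- The support of `x` as a finset. -/
def suppF {k : ℕ} [Fintype V] [DecidableEq V] (x : V → Fin (k+1)) : Finset V :=
  Finset.univ.filter (fun v => x v ≠ 0)

lemma mem_suppF {k : ℕ} [Fintype V] [DecidableEq V] {x : V → Fin (k+1)} {v : V} :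
    v ∈ suppF x ↔ x v ≠ 0 := by simp [suppF]


lemma suppF_update_ne {k : ℕ} [Fintype V] [DecidableEq V] (x : V → Fin (k+1)) (v : V)
    {i : Fin (k+1)} (hi : i ≠ 0) :
    suppF (Function.update x v i) = insert v (suppF x) := by
  ext w
  by_cases h : w = v <;> simp [suppF, Function.update_apply, h, hi]


lemma suppF_update_zero {k : ℕ} [Fintype V] [DecidableEq V] (x : V → Fin (k+1)) (v : V) :
    suppF (Function.update x v (0 : Fin (k+1))) = (suppF x).erase v := by
  ext w
  by_cases h : w = v <;> simp [suppF, Function.update_apply, h]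


lemma exists_basis_superset [Fintype V] [DecidableEq V] (M : FinMatroid V) :
    ∀ (n : ℕ) (A : Finset V), Fintype.card V - A.card ≤ n → M.Indep A →
      ∃ B, A ⊆ B ∧ M.IsBasis B := by
  intro n
  induction n with
  | zero =>
    intro A hn hA
    refine ⟨A, subset_rfl, hA, fun C hC hAC => ?_⟩
    by_contra hne
    have hlt : A.card < C.card := Finset.card_lt_card (ssubset_of_subset_of_ne hAC (Ne.symm hne))
    have := Finset.card_le_univ C
    omega
  | succ m ih =>
    intro A hn hA
    by_cases h : ∀ ⦃C : Finset V⦄, M.Indep C → A ⊆ C → C = A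
    · exact ⟨A, subset_rfl, hA, h⟩
    · push_neg at h
      obtain ⟨C, hC, hAC, hne⟩ := h
      have hlt : A.card < C.card := Finset.card_lt_card (ssubset_of_subset_of_ne hAC (Ne.symm hne))
      obtain ⟨x, hx, hxA⟩ := M.indep_exchange hA hC hlt
      have hxnA : x ∉ A := (Finset.mem_sdiff.mp hx).2
      have hcard : (insert x A).card = A.card + 1 := Finset.card_insert_of_notMem hxnA
      have hle : (insert x A).card ≤ Fintype.card V := Finset.card_le_univ _
      obtain ⟨B, hB1, hB2⟩ := ih (insert x A) (by omega) hxA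
      exact ⟨B, (Finset.subset_insert x A).trans hB1, hB2⟩


lemma exists_indep_between [Fintype V] [DecidableEq V] (M : FinMatroid V) :
    ∀ (n : ℕ) (A B : Finset V), M.Indep A → M.Indep B → A.card ≤ B.card →
      B.card - A.card ≤ n → ∃ C, A ⊆ C ∧ C ⊆ A ∪ B ∧ M.Indep C ∧ C.card = B.card := by
  intro n
  induction n with
  | zero =>
    intro A B hA hB hle hd
    exact ⟨A, subset_rfl, Finset.subset_union_left, hA, by omega⟩
  | succ m ih =>
    intro A B hA hB hle hd
    rcases eq_or_lt_of_le hle with heq | hlt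
    · exact ⟨A, subset_rfl, Finset.subset_union_left, hA, heq⟩
    · obtain ⟨x, hx, hxA⟩ := M.indep_exchange hA hB hlt
      have hxB : x ∈ B := (Finset.mem_sdiff.mp hx).1
      have hxnA : x ∉ A := (Finset.mem_sdiff.mp hx).2
      have hcard : (insert x A).card = A.card + 1 := Finset.card_insert_of_notMem hxnA
      obtain ⟨C, hC1, hC2, hC3, hC4⟩ := ih (insert x A) B hxA hB (by omega) (by omega)
      refine ⟨C, (Finset.subset_insert x A).trans hC1, ?_, hC3, hC4⟩
      intro w hw
      rcases Finset.mem_union.mp (hC2 hw) with h | h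
      · rcases Finset.mem_insert.mp h with h | h
        · exact Finset.mem_union_right _ (h ▸ hxB)
        · exact Finset.mem_union_left _ h
      · exact Finset.mem_union_right _ h


lemma marg_close {k : ℕ} [DecidableEq V] {f fh : (V → Fin (k+1)) → ℝ} {ε : ℝ}
    (hclose : ∀ x, |f x - fh x| ≤ ε) (x : V → Fin (k+1)) (v : V) (i : Fin (k+1)) :
    marg f x v i ≤ marg fh x v i + 2 * ε := by
  have h1 := abs_le.mp (hclose (Function.update x v i))
  have h2 := abs_le.mp (hclose x)
  simp only [marg]
  linarith [h1.1, h1.2, h2.1, h2.2]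


lemma step_lemma {k : ℕ} (hk : 2 ≤ k) [Fintype V] [DecidableEq V]
    (M : FinMatroid V) (r : ℕ)
    (hrank : ∀ B : Finset V, M.IsBasis B → B.card = r)
    (f fh : (V → Fin (k+1)) → ℝ)
    (hos : OrthantSubmodular f) (hpm : PairwiseMonotone f)
    (ε : ℝ) (hclose : ∀ x, |f x - fh x| ≤ ε)
    (x : V → Fin (k+1)) (ev : V) (ti : Fin (k+1))
    (hti : ti ≠ 0) (hxe : x ev = 0)
    (hind : M.Indep (insert ev (suppF x)))
    (hgreedy : ∀ v, x v = 0 → M.Indep (insert v (suppF x)) → ∀ i : Fin (k+1), i ≠ 0 →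
      marg fh x ev ti ≥ marg fh x v i)
    (O : V → Fin (k+1)) (hpre : preceq x O) (hB : M.IsBasis (suppF O)) :
    ∃ O', preceq (Function.update x ev ti) O' ∧ M.IsBasis (suppF O') ∧
      f O - f O' ≤ 2 * marg fh x ev ti + 4 * ε := by
  have hsx : suppF x ⊆ suppF O := by
    intro v hv
    rw [mem_suppF] at hv ⊢
    rw [hpre v hv]; exact hv
  -- find the element oj to remove
  have hcase : ∃ oj : V, O oj ≠ 0 ∧ x oj = 0 ∧ Function.update O oj 0 ev = 0 ∧
      M.IsBasis (insert ev ((suppF O).erase oj)) := by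
    by_cases he : O ev = 0
    · -- ev ∉ suppF O : exchange argument
      have hevO : ev ∉ suppF O := by rw [mem_suppF]; simpa using he
      -- card of B₀ := insert ev (suppF x) is ≤ r
      obtain ⟨D, hD1, hD2⟩ := exists_basis_superset M (Fintype.card V)
        (insert ev (suppF x)) (by omega) hind
      have hDr : D.card = r := hrank D hD2
      have hcardB : (insert ev (suppF x)).card ≤ r := hDr ▸ Finset.card_le_card hD1
      have hOr : (suppF O).card = r := hrank _ hB
      obtain ⟨C, hC1, hC2, hC3, hC4⟩ := exists_indep_between M r
        (insert ev (suppF x)) (suppF O) hind hB.1 (by omega) (by omega)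
      rw [hOr] at hC4
      -- C is a basis
      obtain ⟨D', hD'1, hD'2⟩ := exists_basis_superset M (Fintype.card V) C (by omega) hC3
      have hCD' : C = D' := by
        refine Finset.eq_of_subset_of_card_le hD'1 ?_
        rw [hrank D' hD'2, hC4]
      have hCbasis : M.IsBasis C := hCD' ▸ hD'2
      have hevC : ev ∈ C := hC1 (Finset.mem_insert_self _ _)
      have hCsub : C ⊆ insert ev (suppF O) := by
        intro w hw
        rcases Finset.mem_union.mp (hC2 hw) with h | h
        · rcases Finset.mem_insert.mp h with h | h
          · exact h ▸ Finset.mem_insert_self _ _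
          · exact Finset.mem_insert_of_mem (hsx h)
        · exact Finset.mem_insert_of_mem h
      -- A ∩ C = C.erase ev, so card (A \ C) = 1
      have hinter : suppF O ∩ C = C.erase ev := by
        ext w
        simp only [Finset.mem_inter, Finset.mem_erase]
        constructor
        · rintro ⟨hwA, hwC⟩
          exact ⟨fun hwe => hevO (hwe ▸ hwA), hwC⟩
        · rintro ⟨hwe, hwC⟩
          rcases Finset.mem_insert.mp (hCsub hwC) with h | h
          · exact absurd h hwe
          · exact ⟨h, hwC⟩
      have hr1 : 1 ≤ r := by
        have : 0 < C.card := Finset.card_pos.mpr ⟨ev, hevC⟩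
        omega
      have hcardinter : (suppF O ∩ C).card = r - 1 := by
        rw [hinter, Finset.card_erase_of_mem hevC, hC4]
      have hcardsdiff : (suppF O \ C).card = 1 := by
        have := Finset.card_inter_add_card_sdiff (suppF O) C
        omega
      obtain ⟨oj, hoj⟩ := Finset.card_eq_one.mp hcardsdiff
      have hojA : oj ∈ suppF O := by
        have : oj ∈ suppF O \ C := hoj ▸ Finset.mem_singleton_self oj
        exact (Finset.mem_sdiff.mp this).1
      have hojnC : oj ∉ C := by
        have : oj ∈ suppF O \ C := hoj ▸ Finset.mem_singleton_self oj
        exact (Finset.mem_sdiff.mp this).2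
      have hojne : oj ≠ ev := fun h => hevO (h ▸ hojA)
      have hCeq : C = insert ev ((suppF O).erase oj) := by
        ext w
        simp only [Finset.mem_insert, Finset.mem_erase]
        constructor
        · intro hw
          by_cases hwe : w = ev
          · exact Or.inl hwe
          · refine Or.inr ⟨fun hwo => hojnC (hwo ▸ hw), ?_⟩
            rcases Finset.mem_insert.mp (hCsub hw) with h | h
            · exact absurd h hwe
            · exact h
        · rintro (hw | ⟨hwo, hwA⟩)
          · exact hw ▸ hevC
          · by_contra hwC
            have : w ∈ suppF O \ C := Finset.mem_sdiff.mpr ⟨hwA, hwC⟩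
            rw [hoj, Finset.mem_singleton] at this
            exact hwo this
      refine ⟨oj, mem_suppF.mp hojA, ?_, ?_, hCeq ▸ hCbasis⟩
      · by_contra hx0
        exact hojnC (hC1 (Finset.mem_insert_of_mem (mem_suppF.mpr hx0)))
      · rw [Function.update_of_ne (Ne.symm hojne)]; exact he
    · -- ev ∈ suppF O : just replace its value
      refine ⟨ev, he, hxe, by simp, ?_⟩
      have : insert ev ((suppF O).erase ev) = suppF O :=
        Finset.insert_erase (mem_suppF.mpr he)
      rw [this]; exact hB
  obtain ⟨oj, hojO, hojx, hyev, hbasis⟩ := hcase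
  set y := Function.update O oj 0 with hy
  set O' := Function.update y ev ti with hO'
  have hsuppO' : suppF O' = insert ev ((suppF O).erase oj) := by
    rw [hO', suppF_update_ne _ _ hti, hy, suppF_update_zero]
  have hyoj : y oj = 0 := by rw [hy]; simp
  have hxy : preceq x y := by
    intro v hv
    have hvoj : v ≠ oj := fun h => hv (h ▸ hojx)
    rw [hy, Function.update_of_ne hvoj]
    exact hpre v hv
  have hOy : Function.update y oj (O oj) = O := by
    rw [hy, Function.update_idem, Function.update_eq_self]
  -- pick b ≠ 0, b ≠ ti
  have hb : ∃ b : Fin (k+1), b ≠ 0 ∧ b ≠ ti := by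
    by_contra h
    push_neg at h
    have hsub : (Finset.univ : Finset (Fin (k+1))) ⊆ {0, ti} := by
      intro b _
      simp only [Finset.mem_insert, Finset.mem_singleton]
      by_cases hb0 : b = 0
      · exact Or.inl hb0
      · exact Or.inr (h b hb0)
    have h1 := Finset.card_le_card hsub
    have h2 : ({0, ti} : Finset (Fin (k+1))).card ≤ 2 := Finset.card_insert_le _ _ |>.trans (by simp)
    simp [Finset.card_univ] at h1
    omega
  obtain ⟨b, hb0, hbti⟩ := hb
  refine ⟨O', ?_, hsuppO' ▸ hbasis, ?_⟩
  · intro v hv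
    by_cases hve : v = ev
    · subst hve; rw [hO']; simp
    · rw [Function.update_of_ne hve] at hv
      have hvoj : v ≠ oj := fun h => hv (h ▸ hojx)
      have hrhs : Function.update x ev ti v = x v := Function.update_of_ne hve _ _
      rw [hrhs, hO', Function.update_of_ne hve, hy, Function.update_of_ne hvoj]
      exact hpre v hv
  · -- the inequality
    have hindoj : M.Indep (insert oj (suppF x)) := by
      refine M.indep_subset ?_ hB.1
      intro w hw
      rcases Finset.mem_insert.mp hw with h | h
      · exact h ▸ mem_suppF.mpr hojO
      · exact hsx h
    have h1 : marg f y oj (O oj) ≤ marg f x oj (O oj) := hos x y hxy oj hyoj (O oj) hojO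
    have h2 : marg f x oj (O oj) ≤ marg fh x oj (O oj) + 2 * ε := marg_close hclose x oj (O oj)
    have h3 : marg fh x oj (O oj) ≤ marg fh x ev ti := hgreedy oj hojx hindoj (O oj) hojO
    have h4 : marg f y ev ti + marg f y ev b ≥ 0 := hpm y ev hyev ti b hti hb0 (Ne.symm hbti)
    have h5 : marg f y ev b ≤ marg f x ev b := hos x y hxy ev hyev b hb0
    have h6 : marg f x ev b ≤ marg fh x ev b + 2 * ε := marg_close hclose x ev b
    have h7 : marg fh x ev b ≤ marg fh x ev ti := hgreedy ev hxe hind b hb0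
    have key : f O - f O' = marg f y oj (O oj) - marg f y ev ti := by
      rw [hO']
      simp only [marg, hOy]
      ring
    linarith


/-- Robustness of the greedy algorithm for non-monotone `k`-submodular maximization
under a matroid constraint, run with a perturbed oracle `f̂`:
`f(s) ≥ (1/3)·f(o) − (4/3)·(r+1)·ε`. -/
theorem stmt11 {k : ℕ} (hk : 2 ≤ k) [Fintype V] [DecidableEq V]
    (M : FinMatroid V) (r : ℕ) (hr1 : 1 ≤ r)
    (hrank : ∀ B : Finset V, M.IsBasis B → B.card = r)
    (f fh : (V → Fin (k+1)) → ℝ)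
    (hos : OrthantSubmodular f) (hpm : PairwiseMonotone f)
    (hf0 : 0 ≤ f (fun _ => 0))
    (ε : ℝ) (hε : 0 ≤ ε)
    (hclose : ∀ x, |f x - fh x| ≤ ε)
    -- the greedy sequence `s^{(0)}, …, s^{(r)}`, choosing pair `(e j, t j)` at step `j`:
    (s : ℕ → V → Fin (k+1)) (e : ℕ → V) (t : ℕ → Fin (k+1))
    (hs0 : s 0 = fun _ => 0)
    (hstep : ∀ j ∈ Finset.Icc 1 r,
      s j = Function.update (s (j-1)) (e j) (t j) ∧
      t j ≠ 0 ∧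
      s (j-1) (e j) = 0 ∧
      M.Indep (insert (e j) (suppF (s (j-1)))) ∧
      (∀ v, s (j-1) v = 0 → M.Indep (insert v (suppF (s (j-1)))) →
        ∀ i : Fin (k+1), i ≠ 0 →
        marg fh (s (j-1)) (e j) (t j) ≥ marg fh (s (j-1)) v i))
    (o : V → Fin (k+1)) (ho : M.IsBasis (suppF o)) :
    f (s r) ≥ (1/3) * f o - (4/3) * ((r : ℝ) + 1) * ε := by
  -- cardinality of the greedy supports
  have hsupp : ∀ j, j ≤ r → (suppF (s j)).card = j := by
    intro j
    induction j with
    | zero => intro _; rw [hs0]; simp [suppF]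
    | succ n ih =>
      intro hn
      obtain ⟨h1, h2, h3, _, _⟩ := hstep (n+1) (Finset.mem_Icc.mpr ⟨by omega, hn⟩)
      simp only [Nat.add_sub_cancel] at h1 h3
      rw [h1, suppF_update_ne _ _ h2,
        Finset.card_insert_of_notMem (by rw [mem_suppF]; simpa using h3), ih (by omega)]
  -- main induction constructing the interpolating sequence
  have main : ∀ j, j ≤ r → ∃ O, preceq (s j) O ∧ M.IsBasis (suppF O) ∧
      f o - f O ≤ 2 * (fh (s j) - fh (s 0)) + 4 * (j : ℝ) * ε := by
    intro j
    induction j with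
    | zero =>
      intro _
      refine ⟨o, ?_, ho, by norm_num⟩
      intro v hv
      rw [hs0] at hv; simp at hv
    | succ n ih =>
      intro hn
      obtain ⟨O, hp, hb, hineq⟩ := ih (by omega)
      obtain ⟨h1, h2, h3, h4, h5⟩ := hstep (n+1) (Finset.mem_Icc.mpr ⟨by omega, hn⟩)
      simp only [Nat.add_sub_cancel] at h1 h2 h3 h4 h5
      obtain ⟨O', hp', hb', hsi⟩ :=
        step_lemma hk M r hrank f fh hos hpm ε hclose (s n) (e (n+1)) (t (n+1))
          h2 h3 h4 h5 O hp hb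
      refine ⟨O', h1 ▸ hp', hb', ?_⟩
      have hmarg : marg fh (s n) (e (n+1)) (t (n+1)) = fh (s (n+1)) - fh (s n) := by
        rw [marg, ← h1]
      push_cast
      rw [hmarg] at hsi
      linarith
  obtain ⟨O, hp, hb, hineq⟩ := main r le_rfl
  -- O = s r
  have hcard : (suppF (s r)).card = r := hsupp r le_rfl
  have hsub : suppF (s r) ⊆ suppF O := by
    intro v hv
    rw [mem_suppF] at hv ⊢
    rw [hp v hv]; exact hv
  have heq : suppF (s r) = suppF O :=
    Finset.eq_of_subset_of_card_le hsub (by rw [hrank _ hb, hcard])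
  have hOs : O = s r := by
    funext v
    by_cases hv : s r v = 0
    · have hvO : v ∉ suppF O := by rw [← heq, mem_suppF]; simpa using hv
      rw [mem_suppF, not_not] at hvO
      rw [hvO, hv]
    · exact hp v hv
  rw [hOs, hs0] at hineq
  have c1 := abs_le.mp (hclose (s r))
  have c2 := abs_le.mp (hclose (s 0))
  rw [hs0] at c2
  have hge : 4 * (r : ℝ) * ε + 4 * ε ≤ 4 * ((r : ℝ) + 1) * ε := by ring_nf; linarith
  linarith [c1.1, c1.2, c2.1, c2.2]

end Stmt11
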